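/- Let D be a finite-dimensional real inner product space, α ∈ (0, 1/2], T : D → D an α-averaged nonexpansive operator with Fix(T) ≠ ∅, t ∈ (0,1), and let (x^k) be a TKMA sequence for T: x^{k+1} = (1−t)T²x^k + t T^{θ_k}x^k with θ_k := −⟨Tx^k − x^k, Tx^k − T²x^k⟩ / ‖Tx^k − x^k‖² and Tx^k ≠ x^k for all k. Then (x^k) converges to some fixed point of T. -/

import Mathlib

open RealInnerProductSpace Filter Topology

/-- `T` is nonexpansive: `‖T x − T y‖ ≤ ‖x − y‖` for all `x, y`. -/
def Nonexpansive {H : Type*} [NormedAddCommGroup H] [InnerProductSpace ℝ H]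
    (T : H → H) : Prop :=
  ∀ x y, ‖T x - T y‖ ≤ ‖x - y‖

/-- `T` is `α`-averaged nonexpansive: `T = (1−α)I + αN` for a nonexpansive `N`. -/
def AveragedNE {H : Type*} [NormedAddCommGroup H] [InnerProductSpace ℝ H]
    (α : ℝ) (T : H → H) : Prop :=
  ∃ N : H → H, Nonexpansive N ∧ ∀ x, T x = (1 - α) • x + α • N x

/-- If `f n ^ 2 → 0` and `f n ≥ 0` then `f n → 0`. -/
lemma tkma_tendsto_of_sq (f : ℕ → ℝ) (h : Tendsto (fun n => (f n)^2) atTop (𝓝 0))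
    (hf : ∀ n, 0 ≤ f n) : Tendsto f atTop (𝓝 0) := by
  have h2 := (Real.continuous_sqrt.tendsto 0).comp h
  have e : ((fun x => Real.sqrt x) ∘ fun n => f n ^ 2) = f := by
    funext n; simp [Function.comp, Real.sqrt_sq (hf n)]
  rw [e] at h2; simpa using h2

/-- Convexity of the squared norm. -/
lemma tkma_convex_sq_norm {D : Type*} [NormedAddCommGroup D] [InnerProductSpace ℝ D]
    (a b : D) (s : ℝ) (h0 : 0 ≤ s) (h1 : s ≤ 1) :
    ‖(1-s) • a + s • b‖^2 ≤ (1-s)*‖a‖^2 + s*‖b‖^2 := by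
  have hab : ⟪a,b⟫ ≤ ‖a‖*‖b‖ := real_inner_le_norm a b
  have e : ‖(1-s) • a + s • b‖^2 = (1-s)^2*‖a‖^2 + 2*(1-s)*s*⟪a,b⟫ + s^2*‖b‖^2 := by
    rw [@norm_add_sq_real, real_inner_smul_left, real_inner_smul_right, norm_smul, norm_smul]
    simp [mul_pow, abs_of_nonneg h0, abs_of_nonneg (by linarith : (0:ℝ) ≤ 1-s)]
    ring
  nlinarith [sq_nonneg (‖a‖-‖b‖), norm_nonneg a, norm_nonneg b,
    mul_nonneg h0 (by linarith : (0:ℝ) ≤ 1-s)]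

set_option maxHeartbeats 2000000 in
theorem stmt_9 {D : Type*} [NormedAddCommGroup D] [InnerProductSpace ℝ D]
    [FiniteDimensional ℝ D]
    (α : ℝ) (hα : α ∈ Set.Ioc (0 : ℝ) (1/2))
    (T : D → D) (hT : AveragedNE α T)
    (hfix : ∃ z, T z = z)
    (t : ℝ) (ht : t ∈ Set.Ioo (0 : ℝ) 1)
    (x : ℕ → D) (θ : ℕ → ℝ)
    (hTx : ∀ k, T (x k) ≠ x k)
    (hθ : ∀ k, θ k = -⟪T (x k) - x k, T (x k) - T (T (x k))⟫ / ‖T (x k) - x k‖ ^ 2)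
    (hrec : ∀ k, x (k + 1) =
      (1 - t) • T (T (x k)) + t • (T (x k) + θ k • (T (x k) - x k))) :
    ∃ q, T q = q ∧ Tendsto x atTop (nhds q) := by
  obtain ⟨ht0, ht1⟩ := ht
  obtain ⟨hα0, hα2⟩ := hα
  obtain ⟨N, hN, hTN⟩ := hT
  -- T is firmly nonexpansive
  have fne : ∀ a b : D, ‖T a - T b‖^2 ≤ ⟪T a - T b, a - b⟫ := by
    intro a b
    have hM : ‖((2:ℝ)•T a - a) - ((2:ℝ)•T b - b)‖ ≤ ‖a - b‖ := by
      have e : ((2:ℝ)•T a - a) - ((2:ℝ)•T b - b)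
          = (1-2*α) • (a - b) + (2*α) • (N a - N b) := by
        rw [hTN a, hTN b]; module
      rw [e]
      calc ‖(1-2*α) • (a-b) + (2*α) • (N a - N b)‖
          ≤ ‖(1-2*α) • (a-b)‖ + ‖(2*α) • (N a - N b)‖ := norm_add_le _ _
        _ = (1-2*α)*‖a-b‖ + (2*α)*‖N a - N b‖ := by
            rw [norm_smul, norm_smul, Real.norm_eq_abs, Real.norm_eq_abs,
              abs_of_nonneg (by linarith : (0:ℝ) ≤ 1-2*α),
              abs_of_nonneg (by linarith : (0:ℝ) ≤ 2*α)]
        _ ≤ (1-2*α)*‖a-b‖ + (2*α)*‖a-b‖ := by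
            have := hN a b; nlinarith
        _ = ‖a-b‖ := by ring
    have hsq : ‖((2:ℝ)•T a - a) - ((2:ℝ)•T b - b)‖^2 ≤ ‖a-b‖^2 := by
      nlinarith [norm_nonneg (((2:ℝ)•T a - a) - ((2:ℝ)•T b - b)), norm_nonneg (a-b)]
    have expand : ((2:ℝ)•T a - a) - ((2:ℝ)•T b - b) = (2:ℝ)•(T a - T b) - (a - b) := by
      module
    rw [expand, @norm_sub_sq_real, norm_smul, real_inner_smul_left] at hsq
    simp only [Real.norm_ofNat] at hsq
    nlinarith [hsq]
  have nonexp : ∀ a b : D, ‖T a - T b‖ ≤ ‖a - b‖ := by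
    intro a b
    have h1 := fne a b
    have h2 : ⟪T a - T b, a - b⟫ ≤ ‖T a - T b‖ * ‖a - b‖ := real_inner_le_norm _ _
    by_contra hc
    push_neg at hc
    nlinarith [norm_nonneg (T a - T b), norm_nonneg (a-b)]
  have cont : Continuous T := by
    apply LipschitzWith.continuous (K := 1)
    refine LipschitzWith.of_dist_le_mul fun a b => ?_
    simpa [dist_eq_norm] using nonexp a b
  -- key Fejér-type decrease
  have key : ∀ z, T z = z → ∀ k,
      ‖x (k+1) - z‖^2 ≤ ‖x k - z‖^2 - (1-t)*‖T (x k) - x k‖^2 := by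
    intro z hz k
    have hθk := hθ k
    have hreck := hrec k
    set a := x k with ha
    set y := T a with hy
    set w := T y with hw
    set d := y - a with hdd
    have hdne : d ≠ 0 := sub_ne_zero.mpr (hTx k)
    have hd2 : (0:ℝ) < ‖d‖^2 := by
      have := norm_pos_iff.mpr hdne
      positivity
    -- inner product bound from firm nonexpansiveness at a, y
    have hde : ⟪d, y - w⟫ ≤ -‖y - w‖^2 := by
      have h1 := fne a y
      have e : ⟪(y:D) - w, a - y⟫ = -⟪d, y - w⟫ := by
        rw [show a - y = -d by rw [hdd]; abel, inner_neg_right, real_inner_comm]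
      rw [e] at h1; linarith
    have hθ0 : 0 ≤ θ k := by
      rw [hθk]
      apply div_nonneg _ (le_of_lt hd2)
      nlinarith [sq_nonneg ‖y - w‖]
    have hθ1 : θ k ≤ 1 := by
      rw [hθk, div_le_one hd2]
      have hcs := abs_real_inner_le_norm d (y - w)
      have hnd : ‖y - w‖ ≤ ‖d‖ := by
        have := nonexp a y
        rwa [show a - y = -d by rw [hdd]; abel, norm_neg] at this
      have : -⟪d, y - w⟫ ≤ ‖d‖ * ‖y - w‖ := by
        have := neg_abs_le ⟪d, y - w⟫; linarith
      nlinarith [norm_nonneg d]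
    -- distances to the fixed point
    have h1 : ‖y - z‖^2 ≤ ⟪y - z, a - z⟫ := by
      have := fne a z; rwa [hz] at this
    have hip : ⟪y - z, d⟫ ≤ 0 := by
      have e : ⟪y - z, d⟫ = ‖y-z‖^2 - ⟪y - z, a - z⟫ := by
        rw [show d = (y - z) - (a - z) by rw [hdd]; abel, inner_sub_right,
          real_inner_self_eq_norm_sq]
      linarith
    have hyz : ‖y - z‖^2 ≤ ‖a - z‖^2 - ‖d‖^2 := by
      have e : ‖a - z‖^2 = ‖y - z‖^2 - 2*⟪y-z, d⟫ + ‖d‖^2 := by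
        rw [show a - z = (y - z) - d by rw [hdd]; abel, @norm_sub_sq_real]
      linarith
    have hwz : ‖w - z‖ ≤ ‖y - z‖ := by
      have := nonexp y z; rwa [hz] at this
    have hwz2 : ‖w - z‖^2 ≤ ‖a - z‖^2 - ‖d‖^2 := by
      nlinarith [norm_nonneg (w-z), norm_nonneg (y-z)]
    have huz : ‖(y + θ k • d) - z‖^2 ≤ ‖a - z‖^2 := by
      have e : (y + θ k • d) - z = (y - z) + θ k • d := by abel
      rw [e, @norm_add_sq_real, real_inner_smul_right, norm_smul, Real.norm_eq_abs,
        abs_of_nonneg hθ0]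
      have h2 : θ k * ⟪y - z, d⟫ ≤ 0 := mul_nonpos_of_nonneg_of_nonpos hθ0 hip
      have h3 : (θ k * ‖d‖)^2 ≤ ‖d‖^2 := by
        nlinarith [mul_nonneg (mul_nonneg (sub_nonneg.mpr hθ1)
          (by linarith : (0:ℝ) ≤ 1 + θ k)) (sq_nonneg ‖d‖)]
      linarith
    have hx1 : x (k+1) - z = (1-t) • (w - z) + t • ((y + θ k • d) - z) := by
      rw [hreck]; module
    calc ‖x (k+1) - z‖^2 = ‖(1-t) • (w - z) + t • ((y + θ k • d) - z)‖^2 := by rw [hx1]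
      _ ≤ (1-t)*‖w - z‖^2 + t*‖(y + θ k • d) - z‖^2 :=
          tkma_convex_sq_norm _ _ t (le_of_lt ht0) (le_of_lt ht1)
      _ ≤ (1-t)*(‖a - z‖^2 - ‖d‖^2) + t*‖a - z‖^2 :=
          add_le_add (mul_le_mul_of_nonneg_left hwz2 (by linarith))
            (mul_le_mul_of_nonneg_left huz (le_of_lt ht0))
      _ = ‖a - z‖^2 - (1-t)*‖d‖^2 := by ring
  -- Fejér monotonicity w.r.t. any fixed point
  have anti : ∀ z, T z = z → Antitone (fun k => ‖x k - z‖^2) := by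
    intro z hz
    apply antitone_nat_of_succ_le
    intro k
    have h1 := key z hz k
    have h2 : 0 ≤ (1-t)*‖T (x k) - x k‖^2 :=
      mul_nonneg (by linarith) (sq_nonneg _)
    linarith
  obtain ⟨z, hz⟩ := hfix
  set S := fun k => ‖x k - z‖^2 with hS
  have hSanti := anti z hz
  have hSbdd : BddBelow (Set.range S) := ⟨0, by rintro _ ⟨k, rfl⟩; exact sq_nonneg _⟩
  have hSconv : Tendsto S atTop (𝓝 (⨅ i, S i)) := tendsto_atTop_ciInf hSanti hSbdd
  -- residual tends to zero
  have hdk2 : Tendsto (fun k => ‖T (x k) - x k‖^2) atTop (𝓝 0) := by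
    apply squeeze_zero (fun k => sq_nonneg _) (g := fun k => (S k - S (k+1))/(1-t))
    · intro k
      have h1 := key z hz k
      rw [le_div_iff₀ (by linarith : (0:ℝ) < 1-t)]
      simp only [hS]; nlinarith
    · have h1 : Tendsto (fun k => S (k+1)) atTop (𝓝 (⨅ i, S i)) := by
        have := hSconv.comp (tendsto_add_atTop_nat 1)
        exact this
      have := (hSconv.sub h1).div_const (1-t)
      simpa using this
  have hnorm : Tendsto (fun k => ‖T (x k) - x k‖) atTop (𝓝 0) :=
    tkma_tendsto_of_sq _ hdk2 (fun k => norm_nonneg _)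
  have hvec : Tendsto (fun k => T (x k) - x k) atTop (𝓝 0) :=
    tendsto_zero_iff_norm_tendsto_zero.mpr hnorm
  -- bounded, extract convergent subsequence
  have hbdd : ∀ k, x k ∈ Metric.closedBall z ‖x 0 - z‖ := by
    intro k
    have h1 : S k ≤ S 0 := hSanti (Nat.zero_le k)
    simp only [hS] at h1
    rw [Metric.mem_closedBall, dist_eq_norm]
    exact (pow_le_pow_iff_left₀ (norm_nonneg _) (norm_nonneg _) (by norm_num)).mp h1
  obtain ⟨q, -, φ, hφ, hxφ⟩ := (isCompact_closedBall z ‖x 0 - z‖).tendsto_subseq hbdd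
  have hTq : T q = q := by
    have l1 : Tendsto (fun n => T (x (φ n))) atTop (𝓝 (T q)) := (cont.tendsto q).comp hxφ
    have l2 : Tendsto (fun n => T (x (φ n))) atTop (𝓝 q) := by
      have := hxφ.add (hvec.comp hφ.tendsto_atTop)
      simpa [Function.comp] using this
    exact tendsto_nhds_unique l1 l2
  refine ⟨q, hTq, ?_⟩
  -- full convergence via Fejér monotonicity w.r.t. q
  set S' := fun k => ‖x k - q‖^2 with hS'
  have hS'anti := anti q hTq
  have hS'bdd : BddBelow (Set.range S') := ⟨0, by rintro _ ⟨k, rfl⟩; exact sq_nonneg _⟩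
  have hS'conv : Tendsto S' atTop (𝓝 (⨅ i, S' i)) := tendsto_atTop_ciInf hS'anti hS'bdd
  have hsub1 : Tendsto (S' ∘ φ) atTop (𝓝 (⨅ i, S' i)) := hS'conv.comp hφ.tendsto_atTop
  have hsub2 : Tendsto (S' ∘ φ) atTop (𝓝 0) := by
    have hc : Continuous (fun v : D => ‖v - q‖^2) :=
      (continuous_norm.comp (continuous_id.sub continuous_const)).pow 2
    have := (hc.tendsto q).comp hxφ
    simpa [Function.comp_def, hS'] using this
  have hinf : (⨅ i, S' i) = 0 := tendsto_nhds_unique hsub1 hsub2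
  rw [hinf] at hS'conv
  have hnq : Tendsto (fun k => ‖x k - q‖) atTop (𝓝 0) :=
    tkma_tendsto_of_sq _ hS'conv (fun k => norm_nonneg _)
  rw [tendsto_iff_norm_sub_tendsto_zero]
  exact hnq
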